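/- Let 0 < α < 1/3, b = 1/(2√((1+α)(1−3α))), d = 1/(2√((1−α)(1+3α))), and μ₂ = (1 − α − √((1+α)(1−3α)))/(2α), μ₄ = (1 + α − √((1−α)(1+3α)))/(2α). Define f, g : ℤ → ℝ by f_n = b·μ₂^{|n|} + d·μ₄^{|n|} and g_n = b·μ₂^{|n|} − d·μ₄^{|n|}. Then f and g satisfy f_n = δ(n,0) + α(f_{n−1} + f_{n+1} + g_n) and g_n = α(g_{n−1} + g_{n+1} + f_n) for all integers n. -/

import Mathlib

theorem two_level_walk_solution (α : ℝ) (hα0 : 0 < α) (hα1 : α < 1 / 3)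
    (b d μ₂ μ₄ : ℝ)
    (hb : b = 1 / (2 * Real.sqrt ((1 + α) * (1 - 3 * α))))
    (hd : d = 1 / (2 * Real.sqrt ((1 - α) * (1 + 3 * α))))
    (hμ₂ : μ₂ = (1 - α - Real.sqrt ((1 + α) * (1 - 3 * α))) / (2 * α))
    (hμ₄ : μ₄ = (1 + α - Real.sqrt ((1 - α) * (1 + 3 * α))) / (2 * α))
    (f g : ℤ → ℝ)
    (hf : ∀ n : ℤ, f n = b * μ₂ ^ n.natAbs + d * μ₄ ^ n.natAbs)
    (hg : ∀ n : ℤ, g n = b * μ₂ ^ n.natAbs - d * μ₄ ^ n.natAbs) :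
    (∀ n : ℤ, f n = (if n = 0 then 1 else 0) + α * (f (n - 1) + f (n + 1) + g n)) ∧
    (∀ n : ℤ, g n = α * (g (n - 1) + g (n + 1) + f n)) := by
  have hαne : α ≠ 0 := ne_of_gt hα0
  set s := Real.sqrt ((1 + α) * (1 - 3 * α)) with hsdef
  set t := Real.sqrt ((1 - α) * (1 + 3 * α)) with htdef
  have hs2 : s ^ 2 = (1 + α) * (1 - 3 * α) := Real.sq_sqrt (by nlinarith)
  have ht2 : t ^ 2 = (1 - α) * (1 + 3 * α) := Real.sq_sqrt (by nlinarith)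
  have hspos : 0 < s := Real.sqrt_pos.mpr (by nlinarith)
  have htpos : 0 < t := Real.sqrt_pos.mpr (by nlinarith)
  have hsne : s ≠ 0 := ne_of_gt hspos
  have htne : t ≠ 0 := ne_of_gt htpos
  have hA : α * μ₂ ^ 2 + α = (1 - α) * μ₂ := by
    rw [hμ₂]; field_simp; nlinarith [hs2]
  have hB : α * μ₄ ^ 2 + α = (1 + α) * μ₄ := by
    rw [hμ₄]; field_simp; nlinarith [ht2]
  have h2 : 2 * α * μ₂ = 1 - α - s := by
    rw [hμ₂]; field_simp
  have h4 : 2 * α * μ₄ = 1 + α - t := by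
    rw [hμ₄]; field_simp
  have hbs : b * s = 1 / 2 := by
    rw [hb]; field_simp
  have hdt : d * t = 1 / 2 := by
    rw [hd]; field_simp
  constructor
  · intro n
    rw [hf, hf, hf, hg]
    rcases lt_trichotomy n 0 with h | h | h
    · rw [if_neg (by omega)]
      set m := (n + 1).natAbs with hm
      have e1 : n.natAbs = m + 1 := by omega
      have e2 : (n - 1).natAbs = m + 2 := by omega
      rw [e1, e2]
      linear_combination (-(b * μ₂ ^ m)) * hA + (-(d * μ₄ ^ m)) * hB
    · subst h
      norm_num
      linear_combination (-b) * h2 + (-d) * h4 + hbs + hdt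
    · rw [if_neg (by omega)]
      set m := (n - 1).natAbs with hm
      have e1 : n.natAbs = m + 1 := by omega
      have e2 : (n + 1).natAbs = m + 2 := by omega
      rw [e1, e2]
      linear_combination (-(b * μ₂ ^ m)) * hA + (-(d * μ₄ ^ m)) * hB
  · intro n
    rw [hg, hg, hg, hf]
    rcases lt_trichotomy n 0 with h | h | h
    · set m := (n + 1).natAbs with hm
      have e1 : n.natAbs = m + 1 := by omega
      have e2 : (n - 1).natAbs = m + 2 := by omega
      rw [e1, e2]
      linear_combination (-(b * μ₂ ^ m)) * hA + (d * μ₄ ^ m) * hB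
    · subst h
      norm_num
      linear_combination (-b) * h2 + d * h4 + hbs - hdt
    · set m := (n - 1).natAbs with hm
      have e1 : n.natAbs = m + 1 := by omega
      have e2 : (n + 1).natAbs = m + 2 := by omega
      rw [e1, e2]
      linear_combination (-(b * μ₂ ^ m)) * hA + (d * μ₄ ^ m) * hB
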